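/- Let G be a graph with N vertices and pN²/2 edges, and fix integers n, k with 1 ≤ k ≤ n. If a vertex v is called bad with respect to k when the number of k-sequences in N(v) with common neighborhood of size at most (2n)^{-n-1} p^k N is at least (1/(2n))|N(v)|^k, then the sum of |N(v)| over all vertices v that are bad with respect to k is at most pN²/(2n). -/

import Mathlib

open Finset
open scoped Classical

/-- the sum of the degrees over the vertices that are bad with
respect to `k` is at most `p N^2 / (2n)`. -/
theorem stmt2 {V : Type*} [Fintype V] (G : SimpleGraph V)
    (N n k : ℕ) (p : ℝ) (hN : Fintype.card V = N) (hk : 1 ≤ k) (hkn : k ≤ n)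
    (he : (G.edgeFinset.card : ℝ) = p * N ^ 2 / 2)
    (bad : V → Prop)
    (hbad : ∀ v, bad v ↔
      (1 / (2 * (n : ℝ))) * (G.degree v : ℝ) ^ k ≤
        ((Finset.univ.filter (fun S : Fin k → V =>
          (∀ i, S i ∈ G.neighborFinset v) ∧
          (((Finset.univ.filter (fun w => ∀ i, G.Adj (S i) w)).card : ℝ) ≤
            p ^ k * N / (2 * (n : ℝ)) ^ (n + 1)))).card : ℝ)) :
    ∑ v ∈ Finset.univ.filter (fun v => bad v), (G.degree v : ℝ) ≤
      p * N ^ 2 / (2 * n) := by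
  classical
  rcases Nat.eq_zero_or_pos N with h0 | hNpos
  · have hE : IsEmpty V := Fintype.card_eq_zero_iff.mp (hN.trans h0)
    simp [Finset.univ_eq_empty, h0]
  have hn1 : 1 ≤ n := hk.trans hkn
  have hnR : (1:ℝ) ≤ (n:ℝ) := by exact_mod_cast hn1
  have h2n : (0:ℝ) < 2 * n := by linarith
  have hNR : (0:ℝ) < (N:ℝ) := by exact_mod_cast hNpos
  have hp : 0 ≤ p := by
    have h1 : (0:ℝ) ≤ p * N ^ 2 / 2 := he ▸ Nat.cast_nonneg _
    by_contra hneg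
    push_neg at hneg
    have hN2 : (0:ℝ) < (N:ℝ)^2 := by positivity
    have : p * (N:ℝ)^2 < 0 := mul_neg_of_neg_of_pos hneg hN2
    linarith
  set t : ℝ := p ^ k * N / (2 * (n : ℝ)) ^ (n + 1) with ht
  have ht0 : 0 ≤ t := by rw [ht]; positivity
  -- Step A : double counting
  have hA : (∑ v : V, ((Finset.univ.filter (fun S : Fin k → V =>
        (∀ i, S i ∈ G.neighborFinset v) ∧
        (((Finset.univ.filter (fun w => ∀ i, G.Adj (S i) w)).card : ℝ) ≤ t))).card : ℝ))
      ≤ (N:ℝ)^k * t := by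
    have e1 : ∀ v : V, ((Finset.univ.filter (fun S : Fin k → V =>
        (∀ i, S i ∈ G.neighborFinset v) ∧
        (((Finset.univ.filter (fun w => ∀ i, G.Adj (S i) w)).card : ℝ) ≤ t))).card : ℝ)
        = ∑ S : Fin k → V, if ((∀ i, S i ∈ G.neighborFinset v) ∧
          (((Finset.univ.filter (fun w => ∀ i, G.Adj (S i) w)).card : ℝ) ≤ t))
          then (1:ℝ) else 0 := by
      intro v
      rw [Finset.card_filter]
      push_cast
      rfl
    simp only [e1]
    rw [Finset.sum_comm]
    have e2 : ∀ S : Fin k → V,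
        (∑ v : V, if ((∀ i, S i ∈ G.neighborFinset v) ∧
          (((Finset.univ.filter (fun w => ∀ i, G.Adj (S i) w)).card : ℝ) ≤ t))
          then (1:ℝ) else 0) ≤ t := by
      intro S
      by_cases hQ : ((Finset.univ.filter (fun w => ∀ i, G.Adj (S i) w)).card : ℝ) ≤ t
      · have e3 : (∑ v : V, if ((∀ i, S i ∈ G.neighborFinset v) ∧
            (((Finset.univ.filter (fun w => ∀ i, G.Adj (S i) w)).card : ℝ) ≤ t))
            then (1:ℝ) else 0)
            = ((Finset.univ.filter (fun v : V => ∀ i, S i ∈ G.neighborFinset v)).card : ℝ) := by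
          simp only [hQ, and_true, Finset.sum_boole]
        rw [e3]
        have e4 : (Finset.univ.filter (fun v : V => ∀ i, S i ∈ G.neighborFinset v))
            = (Finset.univ.filter (fun w => ∀ i, G.Adj (S i) w)) := by
          ext v
          simp [SimpleGraph.mem_neighborFinset, SimpleGraph.adj_comm]
        rw [e4]
        exact hQ
      · simp only [hQ, and_false, if_false, Finset.sum_const_zero]
        exact ht0
    calc (∑ S : Fin k → V, ∑ v : V, if ((∀ i, S i ∈ G.neighborFinset v) ∧
          (((Finset.univ.filter (fun w => ∀ i, G.Adj (S i) w)).card : ℝ) ≤ t))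
          then (1:ℝ) else 0)
        ≤ ∑ _S : Fin k → V, t := Finset.sum_le_sum (fun S _ => e2 S)
      _ = (N:ℝ)^k * t := by
          rw [Finset.sum_const, Finset.card_univ, nsmul_eq_mul]
          congr 1
          rw [Fintype.card_fun, hN]
          push_cast
          simp
  -- Step B : bad vertices have many heavy sequences
  set B := Finset.univ.filter (fun v => bad v) with hB
  have hBsub : ∀ v ∈ B, bad v := by
    intro v hv
    exact (Finset.mem_filter.mp hv).2
  have hdeg0 : ∀ v ∈ B, (0:ℝ) ≤ (G.degree v : ℝ) := fun v _ => Nat.cast_nonneg _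
  have hBsum : ∑ v ∈ B, (G.degree v : ℝ) ^ k ≤ 2 * n * ((N:ℝ)^k * t) := by
    have step1 : ∑ v ∈ B, (G.degree v : ℝ) ^ k
        ≤ ∑ v ∈ B, (2 * (n:ℝ)) * ((Finset.univ.filter (fun S : Fin k → V =>
            (∀ i, S i ∈ G.neighborFinset v) ∧
            (((Finset.univ.filter (fun w => ∀ i, G.Adj (S i) w)).card : ℝ) ≤ t))).card : ℝ) := by
      refine Finset.sum_le_sum (fun v hv => ?_)
      have h := (hbad v).mp (hBsub v hv)
      have := mul_le_mul_of_nonneg_left h (le_of_lt h2n)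
      calc (G.degree v : ℝ) ^ k = (2 * n) * ((1 / (2 * (n:ℝ))) * (G.degree v : ℝ) ^ k) := by
            field_simp
        _ ≤ _ := this
    refine step1.trans ?_
    rw [← Finset.mul_sum]
    refine mul_le_mul_of_nonneg_left ?_ (le_of_lt h2n)
    refine le_trans ?_ hA
    exact Finset.sum_le_sum_of_subset_of_nonneg (Finset.filter_subset _ _)
      (fun v _ _ => Nat.cast_nonneg _)
  -- Step C : power mean inequality
  obtain ⟨m, rfl⟩ : ∃ m, k = m + 1 := ⟨k - 1, (Nat.succ_pred_eq_of_pos hk).symm⟩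
  have hPM : (∑ v ∈ B, (G.degree v : ℝ)) ^ (m + 1)
      ≤ (B.card : ℝ) ^ m * ∑ v ∈ B, (G.degree v : ℝ) ^ (m + 1) := by
    rcases B.eq_empty_or_nonempty with hBe | hBne
    · simp [hBe]
    have h := pow_sum_div_card_le_sum_pow (f := fun v => (G.degree v : ℝ)) hdeg0 m
    have hc : (0:ℝ) < (B.card : ℝ) ^ m := by
      have : 0 < B.card := Finset.card_pos.mpr hBne
      positivity
    rw [div_le_iff₀ hc] at h
    linarith [h]
  -- Combine
  have hcard : (B.card : ℝ) ≤ (N:ℝ) := by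
    have : B.card ≤ Fintype.card V := Finset.card_le_univ _
    rw [hN] at this
    exact_mod_cast this
  have hsumpow0 : (0:ℝ) ≤ ∑ v ∈ B, (G.degree v : ℝ) ^ (m + 1) :=
    Finset.sum_nonneg (fun v hv => pow_nonneg (hdeg0 v hv) _)
  have hcpow : (B.card : ℝ) ^ m ≤ (N:ℝ) ^ m :=
    pow_le_pow_left₀ (Nat.cast_nonneg _) hcard _
  have hmain : (∑ v ∈ B, (G.degree v : ℝ)) ^ (m + 1)
      ≤ (N:ℝ)^m * (2 * n * ((N:ℝ)^(m+1) * t)) := by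
    calc (∑ v ∈ B, (G.degree v : ℝ)) ^ (m + 1)
        ≤ (B.card : ℝ) ^ m * ∑ v ∈ B, (G.degree v : ℝ) ^ (m + 1) := hPM
      _ ≤ (N:ℝ)^m * ∑ v ∈ B, (G.degree v : ℝ) ^ (m + 1) :=
          mul_le_mul_of_nonneg_right hcpow hsumpow0
      _ ≤ (N:ℝ)^m * (2 * n * ((N:ℝ)^(m+1) * t)) :=
          mul_le_mul_of_nonneg_left hBsum (by positivity)
  -- rewrite the RHS bound
  have hrhs : (N:ℝ)^m * (2 * n * ((N:ℝ)^(m+1) * t))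
      ≤ (p * N ^ 2 / (2 * n)) ^ (m + 1) := by
    rw [ht]
    have h2n1 : (1:ℝ) ≤ 2 * n := by linarith
    have e5 : (N:ℝ)^m * (2 * n * ((N:ℝ)^(m+1) * (p ^ (m+1) * N / (2 * (n : ℝ)) ^ (n + 1))))
        = p ^ (m+1) * ((N:ℝ)^2) ^ (m+1) / (2 * (n:ℝ)) ^ n := by
      rw [div_eq_mul_inv, div_eq_mul_inv]
      rw [pow_succ (2 * (n:ℝ)) n]
      have h2nne : (2 * (n:ℝ)) ≠ 0 := ne_of_gt h2n
      field_simp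
      ring
    rw [e5]
    have hpowle : (2 * (n:ℝ)) ^ (m + 1) ≤ (2 * (n:ℝ)) ^ n :=
      pow_le_pow_right₀ h2n1 hkn
    have hnum : (0:ℝ) ≤ p ^ (m+1) * ((N:ℝ)^2) ^ (m+1) := by positivity
    calc p ^ (m+1) * ((N:ℝ)^2) ^ (m+1) / (2 * (n:ℝ)) ^ n
        ≤ p ^ (m+1) * ((N:ℝ)^2) ^ (m+1) / (2 * (n:ℝ)) ^ (m+1) :=
          div_le_div_of_nonneg_left hnum (by positivity) hpowle
      _ = (p * (N:ℝ) ^ 2 / (2 * (n:ℝ))) ^ (m + 1) := by rw [div_pow]; ring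
  refine le_of_pow_le_pow_left₀ (Nat.succ_ne_zero m) (by positivity) ?_
  exact hmain.trans hrhs
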